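/- Let ε ∈ ℝ and let H : ℝ × ℝ² → ℝ, written H(u,x,y), be continuously differentiable and satisfy ∂_uH(u,x,y) + ε·(x·∂_yH(u,x,y) − y·∂_xH(u,x,y)) = 0 for all (u,x,y) ∈ ℝ³. Then there exists a function F : ℂ → ℝ such that H(u,x,y) = F( exp(−iεu)·(x+iy) ) for all (u,x,y) ∈ ℝ³. -/

import Mathlib

/-- Case 4: pp-wave profile invariant under ε∂_θ + ∂_u. -/
theorem ppwave_case4_screw_invariance
    (ε : ℝ) (H : ℝ → ℝ → ℝ → ℝ)
    (hH : ContDiff ℝ 1 (fun p : ℝ × ℝ × ℝ => H p.1 p.2.1 p.2.2))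
    (hpde : ∀ u x y : ℝ,
      deriv (fun u' => H u' x y) u
        + ε * (x * deriv (fun y' => H u x y') y - y * deriv (fun x' => H u x' y) x) = 0) :
    ∃ F : ℂ → ℝ, ∀ u x y : ℝ,
      H u x y = F (Complex.exp (-Complex.I * (ε : ℂ) * (u : ℂ))
        * ((x : ℂ) + (y : ℂ) * Complex.I)) := by
  set f : ℝ × ℝ × ℝ → ℝ := fun p => H p.1 p.2.1 p.2.2 with hf_def
  have hf : Differentiable ℝ f := hH.differentiable one_ne_zero
  -- partial derivatives as directional derivatives of f
  have hdu : ∀ u x y : ℝ, deriv (fun u' => H u' x y) u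
      = fderiv ℝ f (u, x, y) (1, 0, 0) := by
    intro u x y
    have hc : HasDerivAt (fun u' : ℝ => (u', x, y)) ((1 : ℝ), (0 : ℝ), (0 : ℝ)) u := by
      exact (hasDerivAt_id u).prodMk ((hasDerivAt_const u x).prodMk (hasDerivAt_const u y))
    exact ((hf (u, x, y)).hasFDerivAt.comp_hasDerivAt u hc).deriv
  have hdx : ∀ u x y : ℝ, deriv (fun x' => H u x' y) x
      = fderiv ℝ f (u, x, y) (0, 1, 0) := by
    intro u x y
    have hc : HasDerivAt (fun x' : ℝ => (u, x', y)) ((0 : ℝ), (1 : ℝ), (0 : ℝ)) x := by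
      exact (hasDerivAt_const x u).prodMk ((hasDerivAt_id x).prodMk (hasDerivAt_const x y))
    exact ((hf (u, x, y)).hasFDerivAt.comp_hasDerivAt x hc).deriv
  have hdy : ∀ u x y : ℝ, deriv (fun y' => H u x y') y
      = fderiv ℝ f (u, x, y) (0, 0, 1) := by
    intro u x y
    have hc : HasDerivAt (fun y' : ℝ => (u, x, y')) ((0 : ℝ), (0 : ℝ), (1 : ℝ)) y := by
      exact (hasDerivAt_const y u).prodMk ((hasDerivAt_const y x).prodMk (hasDerivAt_id y))
    exact ((hf (u, x, y)).hasFDerivAt.comp_hasDerivAt y hc).deriv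
  -- key invariance along the flow
  have key : ∀ x0 y0 u : ℝ,
      H u (x0 * Real.cos (ε * u) - y0 * Real.sin (ε * u))
        (x0 * Real.sin (ε * u) + y0 * Real.cos (ε * u)) = H 0 x0 y0 := by
    intro x0 y0 u
    set a : ℝ → ℝ := fun t => x0 * Real.cos (ε * t) - y0 * Real.sin (ε * t) with ha_def
    set b : ℝ → ℝ := fun t => x0 * Real.sin (ε * t) + y0 * Real.cos (ε * t) with hb_def
    set φ : ℝ → ℝ := fun t => H t (a t) (b t) with hφ_def
    have hφ' : ∀ t : ℝ, HasDerivAt φ 0 t := by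
      intro t
      have hlin : HasDerivAt (fun t : ℝ => ε * t) ε t := by
        simpa using (hasDerivAt_id t).const_mul ε
      have hcos : HasDerivAt (fun t : ℝ => Real.cos (ε * t)) (-Real.sin (ε * t) * ε) t :=
        (Real.hasDerivAt_cos (ε * t)).comp t hlin
      have hsin : HasDerivAt (fun t : ℝ => Real.sin (ε * t)) (Real.cos (ε * t) * ε) t :=
        (Real.hasDerivAt_sin (ε * t)).comp t hlin
      have hA : HasDerivAt a (-(ε * b t)) t := by
        have := (hcos.const_mul x0).sub (hsin.const_mul y0)
        refine this.congr_deriv ?_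
        simp only [hb_def]; ring
      have hB : HasDerivAt b (ε * a t) t := by
        have := (hsin.const_mul x0).add (hcos.const_mul y0)
        refine this.congr_deriv ?_
        simp only [ha_def]; ring
      have hc : HasDerivAt (fun t : ℝ => (t, a t, b t))
          ((1 : ℝ), -(ε * b t), ε * a t) t :=
        (hasDerivAt_id t).prodMk (hA.prodMk hB)
      have hφd : HasDerivAt φ (fderiv ℝ f (t, a t, b t) (1, -(ε * b t), ε * a t)) t :=
        (hf (t, a t, b t)).hasFDerivAt.comp_hasDerivAt (l := f) t hc
      have hsplit : ((1 : ℝ), -(ε * b t), ε * a t)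
          = ((1 : ℝ), (0 : ℝ), (0 : ℝ)) + (-(ε * b t)) • ((0 : ℝ), (1 : ℝ), (0 : ℝ))
            + (ε * a t) • ((0 : ℝ), (0 : ℝ), (1 : ℝ)) := by
        simp [Prod.ext_iff]
      have hzero : fderiv ℝ f (t, a t, b t) (1, -(ε * b t), ε * a t) = 0 := by
        rw [hsplit]
        rw [map_add, map_add, map_smul, map_smul]
        have hp := hpde t (a t) (b t)
        rw [hdu t (a t) (b t), hdx t (a t) (b t), hdy t (a t) (b t)] at hp
        simp only [smul_eq_mul]
        linarith [hp]
      rw [hzero] at hφd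
      exact hφd
    have hconst : φ u = φ 0 := by
      have hdiff : Differentiable ℝ φ := fun t => (hφ' t).differentiableAt
      exact is_const_of_deriv_eq_zero hdiff (fun t => (hφ' t).deriv) u 0
    have h0 : φ 0 = H 0 x0 y0 := by
      simp [hφ_def, ha_def, hb_def]
    rw [← h0, ← hconst]
  refine ⟨fun z => H 0 z.re z.im, fun u x y => ?_⟩
  have hre : (Complex.exp (-Complex.I * (ε : ℂ) * (u : ℂ))
      * ((x : ℂ) + (y : ℂ) * Complex.I)).re
      = x * Real.cos (ε * u) + y * Real.sin (ε * u) := by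
    have h1 : -Complex.I * (ε : ℂ) * (u : ℂ) = ((-(ε * u) : ℝ) : ℂ) * Complex.I := by
      push_cast; ring
    rw [h1, Complex.exp_mul_I]
    simp only [Complex.ofReal_neg, Complex.cos_neg, Complex.sin_neg,
      ← Complex.ofReal_cos, ← Complex.ofReal_sin, Complex.mul_re, Complex.mul_im,
      Complex.add_re, Complex.add_im, Complex.ofReal_re, Complex.ofReal_im,
      Complex.I_re, Complex.I_im, Complex.neg_re, Complex.neg_im]
    ring
  have him : (Complex.exp (-Complex.I * (ε : ℂ) * (u : ℂ))
      * ((x : ℂ) + (y : ℂ) * Complex.I)).im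
      = y * Real.cos (ε * u) - x * Real.sin (ε * u) := by
    have h1 : -Complex.I * (ε : ℂ) * (u : ℂ) = ((-(ε * u) : ℝ) : ℂ) * Complex.I := by
      push_cast; ring
    rw [h1, Complex.exp_mul_I]
    simp only [Complex.ofReal_neg, Complex.cos_neg, Complex.sin_neg,
      ← Complex.ofReal_cos, ← Complex.ofReal_sin, Complex.mul_re, Complex.mul_im,
      Complex.add_re, Complex.add_im, Complex.ofReal_re, Complex.ofReal_im,
      Complex.I_re, Complex.I_im, Complex.neg_re, Complex.neg_im]
    ring
  show H u x y = H 0 (Complex.exp (-Complex.I * (ε : ℂ) * (u : ℂ))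
    * ((x : ℂ) + (y : ℂ) * Complex.I)).re (Complex.exp (-Complex.I * (ε : ℂ) * (u : ℂ))
    * ((x : ℂ) + (y : ℂ) * Complex.I)).im
  rw [hre, him]
  set x0 : ℝ := x * Real.cos (ε * u) + y * Real.sin (ε * u)
  set y0 : ℝ := y * Real.cos (ε * u) - x * Real.sin (ε * u)
  have := key x0 y0 u
  have hx : x0 * Real.cos (ε * u) - y0 * Real.sin (ε * u) = x := by
    simp only [x0, y0]
    linear_combination x * Real.sin_sq_add_cos_sq (ε * u)
  have hy : x0 * Real.sin (ε * u) + y0 * Real.cos (ε * u) = y := by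
    simp only [x0, y0]
    linear_combination y * Real.sin_sq_add_cos_sq (ε * u)
  rw [hx, hy] at this
  exact this
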